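/- Consider the exclusion process on the complete 4-uniform hypergraph with one edge on vertex set {1,2,3,4}, where at rate 1 a uniformly random 4-cycle is applied. Start two particles at {1,2}, and independently start two independent random walkers u, v at 1 and 2 where each walker moves to a uniform 4-cycle image at rate 1. Let B = {3,4}. Then P(u_t ∈ B, v_t ∈ B) ≤ (1−e^{−t})^2 and P(exclusion configuration at time t equals B) ≥ (1/3) t e^{−t}; consequently for all t < 0.33 the exclusion probability strictly exceeds the independent-walker probability, so negative correlation fails. -/

import Mathlib

open Finset
open scoped Classical

noncomputable section

/-- The six 4-cycles of `S_4` (cycles with full support on `Fin 4`). -/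
def FourCycles : Finset (Equiv.Perm (Fin 4)) :=
  Finset.univ.filter fun σ => σ.IsCycle ∧ σ.support = Finset.univ

/-- Generator of the single random walker on the one-edge hypergraph on 4 vertices:
at rate 1 a uniformly random 4-cycle is applied. -/
def Lrw (y x : Fin 4) : ℝ :=
  (1 / 6) * ((FourCycles.filter fun σ => σ y = x).card : ℝ) - (if y = x then 1 else 0)

/-- Generator of the 2-particle exclusion process on the same hypergraph: at rate 1 a
uniformly random 4-cycle is applied to the occupied set. -/
def LexGen (S' S : Finset (Fin 4)) : ℝ :=
  (1 / 6) * ((FourCycles.filter fun σ => S'.image σ = S).card : ℝ) -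
    (if S' = S then 1 else 0)

/- ### Auxiliary computational lemmas -/

def FC' : Finset (Equiv.Perm (Fin 4)) :=
  Finset.univ.filter fun σ =>
    (∃ x, σ x ≠ x ∧ ∀ y, σ y ≠ y → σ.SameCycle x y) ∧ σ.support = Finset.univ

lemma hFC : FourCycles = FC' := by
  ext σ; simp only [FourCycles, FC', Finset.mem_filter, Finset.mem_univ, true_and]; rfl

lemma cnt_rw : ∀ y x : Fin 4,
    (FC'.filter fun σ => σ y = x).card = if y = x then 0 else 2 := by decide

def pairs : Finset (Finset (Fin 4)) := {{0,1},{0,2},{0,3},{1,2},{1,3},{2,3}}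

lemma cnt01 : ∀ S' : Finset (Fin 4),
    (FC'.filter fun σ : Equiv.Perm (Fin 4) => S'.image σ = {0,1}).card
    = if S' = {0,1} then 0 else if S' = {2,3} then 2 else if S'.card = 2 then 1 else 0 := by
  decide

lemma cnt23 : ∀ S' : Finset (Fin 4),
    (FC'.filter fun σ : Equiv.Perm (Fin 4) => S'.image σ = {2,3}).card
    = if S' = {2,3} then 0 else if S' = {0,1} then 2 else if S'.card = 2 then 1 else 0 := by
  decide

lemma cntsum : ∀ S' : Finset (Fin 4),
    (∑ S ∈ pairs, (FC'.filter fun σ : Equiv.Perm (Fin 4) => S'.image σ = S).card)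
    = if S'.card = 2 then 6 else 0 := by decide

lemma pairs_eq : pairs = Finset.univ.filter (fun S : Finset (Fin 4) => S.card = 2) := by decide

lemma Lrw_val (y x : Fin 4) : Lrw y x = if y = x then -1 else 1/3 := by
  unfold Lrw; rw [hFC, cnt_rw y x]; split_ifs <;> norm_num

/- ### ODE facts -/

lemma const_of_deriv0 (g : ℝ → ℝ) (h : ∀ t, HasDerivAt g 0 t) (t : ℝ) : g t = g 0 :=
  is_const_of_deriv_eq_zero (fun x => (h x).differentiableAt)
    (fun x => (h x).deriv) t 0

lemma ode_solve (g : ℝ → ℝ) (a b : ℝ) (hb : b ≠ 0)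
    (h : ∀ t, HasDerivAt g (a - b * g t) t) (t : ℝ) :
    g t = a / b + (g 0 - a / b) * Real.exp (-(b * t)) := by
  have key : ∀ s : ℝ, HasDerivAt (fun r => (g r - a / b) * Real.exp (b * r)) 0 s := by
    intro s
    have h1 : HasDerivAt (fun r => g r - a / b) (a - b * g s) s := (h s).sub_const _
    have h2 : HasDerivAt (fun r : ℝ => Real.exp (b * r)) (Real.exp (b * s) * b) s := by
      have hid : HasDerivAt (fun r : ℝ => b * r) (b * 1) s :=
        (hasDerivAt_id s).const_mul b
      simpa using hid.exp
    have : HasDerivAt (fun r => (g r - a / b) * Real.exp (b * r)) _ s := h1.fun_mul h2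
    convert this using 1
    field_simp
    ring
  have hconst := const_of_deriv0 _ key t
  simp only [mul_zero, Real.exp_zero, mul_one] at hconst
  have h2 : (g t - a / b) * (Real.exp (b * t) * Real.exp (-(b * t)))
      = (g 0 - a / b) * Real.exp (-(b * t)) := by rw [← mul_assoc, hconst]
  rw [← Real.exp_add, add_neg_cancel, Real.exp_zero, mul_one] at h2
  linarith [h2]

/-- The law of a single walker: probability of being in {2,3}. -/
lemma walker (u : ℝ → Fin 4 → ℝ) (h0 : u 0 2 + u 0 3 = 0)
    (hT0 : u 0 0 + u 0 1 + u 0 2 + u 0 3 = 1)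
    (hu : ∀ t x, HasDerivAt (fun s => u s x) (∑ y, u t y * Lrw y x) t) :
    ∀ t : ℝ, u t 2 + u t 3 = 1/2 - 1/2 * Real.exp (-(4/3 * t)) := by
  have hT' : ∀ t, HasDerivAt (fun s => ∑ x, u s x) 0 t := by
    intro t
    have : HasDerivAt (fun s => ∑ x, u s x) _ t := HasDerivAt.fun_sum (fun x (_ : x ∈ Finset.univ) => hu t x)
    convert this using 1
    simp [Fin.sum_univ_four, Lrw_val]
    ring
  have hT : ∀ t, u t 0 + u t 1 + u t 2 + u t 3 = 1 := by
    intro t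
    have := const_of_deriv0 _ hT' t
    simp only [Fin.sum_univ_four] at this
    linarith [this, hT0]
  have hf : ∀ t, HasDerivAt (fun s => u s 2 + u s 3)
      (2/3 - 4/3 * (u t 2 + u t 3)) t := by
    intro t
    have hd : HasDerivAt (fun s => u s 2 + u s 3) _ t := (hu t 2).add (hu t 3)
    convert hd using 1
    simp [Fin.sum_univ_four, Lrw_val]
    linarith [hT t]
  intro t
  have := ode_solve _ (2/3) (4/3) (by norm_num) hf t
  rw [this, h0]
  norm_num
  ring


lemma coe_bind (s : Finset (Equiv.Perm (Fin 4))) :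
    ((s >>= fun a => pure (⇑a)) : Finset (Fin 4 → Fin 4))
      = s.image (fun σ : Equiv.Perm (Fin 4) => ⇑σ) := by
  ext f
  simp only [Finset.bind_def, Finset.pure_def, Finset.mem_sup, Finset.mem_singleton,
    Finset.mem_image]
  tauto

lemma LexGen_card (S' S : Finset (Fin 4)) :
    LexGen S' S
      = 1/6 * (((FC'.filter fun σ : Equiv.Perm (Fin 4) => S'.image ⇑σ = S)).card : ℝ)
        - (if S' = S then 1 else 0) := by
  unfold LexGen
  rw [coe_bind, Finset.filter_image,
    Finset.card_image_of_injective _ (Equiv.coe_fn_injective), hFC]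

lemma e1 : ({0,1} : Finset (Fin 4)) ≠ {2,3} := by decide
lemma e2 : ({2,3} : Finset (Fin 4)) ≠ {0,1} := by decide
lemma c01 : ({0,1} : Finset (Fin 4)).card = 2 := by decide
lemma c23 : ({2,3} : Finset (Fin 4)).card = 2 := by decide

/- ### Pointwise generator combinations -/

lemma LG_sub (S' : Finset (Fin 4)) : LexGen S' {0,1} - LexGen S' {2,3}
    = (if S' = {0,1} then -(4/3) else if S' = {2,3} then 4/3 else 0) := by
  rw [LexGen_card S' {0,1}, LexGen_card S' {2,3}, cnt01 S', cnt23 S']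
  by_cases h1 : S' = {0,1}
  · subst h1; simp [e1]; norm_num
  · by_cases h2 : S' = {2,3}
    · subst h2; simp [e2]; norm_num
    · simp [h1, h2]

lemma LG_add (S' : Finset (Fin 4)) : LexGen S' {0,1} + LexGen S' {2,3}
    = (if S'.card = 2 then 1/3 else 0) - (if S' = {0,1} then 1 else 0)
      - (if S' = {2,3} then 1 else 0) := by
  rw [LexGen_card S' {0,1}, LexGen_card S' {2,3}, cnt01 S', cnt23 S']
  by_cases h1 : S' = {0,1}
  · subst h1; simp [e1, c01]; norm_num
  · by_cases h2 : S' = {2,3}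
    · subst h2; simp [e2, c23]; norm_num
    · by_cases h3 : S'.card = 2 <;> simp [h1, h2, h3] <;> norm_num

lemma LG_pairsum (S' : Finset (Fin 4)) : ∑ S ∈ pairs, LexGen S' S = 0 := by
  simp only [LexGen_card]
  rw [Finset.sum_sub_distrib, ← Finset.mul_sum, ← Nat.cast_sum, cntsum S']
  rw [Finset.sum_ite_eq pairs S' (fun _ => (1:ℝ))]
  have hmem : S' ∈ pairs ↔ S'.card = 2 := by rw [pairs_eq]; simp
  rw [if_congr hmem rfl rfl]
  split_ifs <;> norm_num

theorem stmt_12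
    (u v : ℝ → Fin 4 → ℝ) (P : ℝ → Finset (Fin 4) → ℝ)
    (hu0 : ∀ x, u 0 x = if x = 0 then 1 else 0)
    (hv0 : ∀ x, v 0 x = if x = 1 then 1 else 0)
    (hP0 : ∀ S, P 0 S = if S = ({0, 1} : Finset (Fin 4)) then 1 else 0)
    (hu : ∀ t x, HasDerivAt (fun s => u s x) (∑ y, u t y * Lrw y x) t)
    (hv : ∀ t x, HasDerivAt (fun s => v s x) (∑ y, v t y * Lrw y x) t)
    (hP : ∀ t S, HasDerivAt (fun s => P s S) (∑ S', P t S' * LexGen S' S) t) :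
    (∀ t, 0 ≤ t → (u t 2 + u t 3) * (v t 2 + v t 3) ≤ (1 - Real.exp (-t)) ^ 2)
    ∧ (∀ t, 0 ≤ t → (1 / 3) * t * Real.exp (-t) ≤ P t ({2, 3} : Finset (Fin 4)))
    ∧ (∀ t, 0 < t → t < 0.33 →
        (u t 2 + u t 3) * (v t 2 + v t 3) < P t ({2, 3} : Finset (Fin 4))) := by
  -- walker laws
  have hufor : ∀ t : ℝ, u t 2 + u t 3 = 1/2 - 1/2 * Real.exp (-(4/3 * t)) := by
    apply walker u (by simp [hu0]) (by simp [hu0]) hu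
  have hvfor : ∀ t : ℝ, v t 2 + v t 3 = 1/2 - 1/2 * Real.exp (-(4/3 * t)) := by
    apply walker v (by simp [hv0]) (by simp [hv0]) hv
  -- exclusion law
  have hT2' : ∀ t, HasDerivAt (fun s => ∑ S ∈ pairs, P s S) 0 t := by
    intro t
    have hh : HasDerivAt (fun s => ∑ S ∈ pairs, P s S) _ t := HasDerivAt.fun_sum (fun S (_ : S ∈ pairs) => hP t S)
    convert hh using 1
    rw [Finset.sum_comm]
    symm
    apply Finset.sum_eq_zero
    intro S' _
    rw [← Finset.mul_sum, LG_pairsum S', mul_zero]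
  have hT2 : ∀ t, (∑ S ∈ pairs, P t S) = 1 := by
    intro t
    rw [const_of_deriv0 _ hT2' t]
    rw [Finset.sum_congr rfl (fun S _ => hP0 S),
      Finset.sum_ite_eq' pairs ({0,1} : Finset (Fin 4)) (fun _ => (1:ℝ))]
    rw [if_pos (by decide)]
  have hd' : ∀ t, HasDerivAt (fun s => P s {0,1} - P s {2,3})
      (0 - 4/3 * (P t {0,1} - P t {2,3})) t := by
    intro t
    have hdd : HasDerivAt (fun s => P s {0,1} - P s {2,3}) _ t := (hP t {0,1}).sub (hP t {2,3})
    convert hdd using 1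
    rw [← Finset.sum_sub_distrib]
    have step : ∀ S' : Finset (Fin 4), P t S' * LexGen S' {0,1} - P t S' * LexGen S' {2,3}
        = (if S' = ({0,1} : Finset (Fin 4)) then -(4/3) * P t S' else 0)
          + (if S' = ({2,3} : Finset (Fin 4)) then (4/3) * P t S' else 0) := by
      intro S'
      rw [← mul_sub, LG_sub S']
      by_cases h1 : S' = {0,1}
      · subst h1; rw [if_pos rfl, if_pos rfl, if_neg (by decide)]; ring
      · by_cases h2 : S' = {2,3}
        · subst h2; rw [if_neg h1, if_neg h1, if_pos rfl, if_pos rfl]; ring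
        · rw [if_neg h1, if_neg h2, if_neg h1, if_neg h2]; ring
    rw [Finset.sum_congr rfl (fun S' _ => step S'), Finset.sum_add_distrib,
      Finset.sum_ite_eq' Finset.univ ({0,1} : Finset (Fin 4)) (fun S' => -(4/3) * P t S'),
      Finset.sum_ite_eq' Finset.univ ({2,3} : Finset (Fin 4)) (fun S' => (4/3) * P t S')]
    simp only [Finset.mem_univ, if_pos]
    ring
  have hw' : ∀ t, HasDerivAt (fun s => P s {0,1} + P s {2,3})
      (1/3 - 1 * (P t {0,1} + P t {2,3})) t := by
    intro t
    have hdd : HasDerivAt (fun s => P s {0,1} + P s {2,3}) _ t := (hP t {0,1}).add (hP t {2,3})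
    convert hdd using 1
    rw [← Finset.sum_add_distrib]
    have step : ∀ S' : Finset (Fin 4), P t S' * LexGen S' {0,1} + P t S' * LexGen S' {2,3}
        = (if S'.card = 2 then 1/3 * P t S' else 0)
          - (if S' = ({0,1} : Finset (Fin 4)) then P t S' else 0)
          - (if S' = ({2,3} : Finset (Fin 4)) then P t S' else 0) := by
      intro S'
      rw [← mul_add, LG_add S']
      by_cases h1 : S' = {0,1}
      · subst h1; simp [e1, c01]; ring
      · by_cases h2 : S' = {2,3}
        · subst h2; simp [e2, c23]; ring
        · by_cases h3 : S'.card = 2 <;> simp [h1, h2, h3] <;> ring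
    rw [Finset.sum_congr rfl (fun S' _ => step S'), Finset.sum_sub_distrib,
      Finset.sum_sub_distrib,
      Finset.sum_ite_eq' Finset.univ ({0,1} : Finset (Fin 4)) (fun S' => P t S'),
      Finset.sum_ite_eq' Finset.univ ({2,3} : Finset (Fin 4)) (fun S' => P t S')]
    have hfil : (∑ S' : Finset (Fin 4), if S'.card = 2 then 1/3 * P t S' else 0)
        = ∑ S ∈ pairs, 1/3 * P t S := by
      rw [pairs_eq, Finset.sum_filter]
    rw [hfil, ← Finset.mul_sum, hT2 t]
    simp only [Finset.mem_univ, if_pos]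
    ring
  have hP001 : P 0 ({0,1} : Finset (Fin 4)) = 1 := by rw [hP0]; rw [if_pos rfl]
  have hP023 : P 0 ({2,3} : Finset (Fin 4)) = 0 := by rw [hP0]; rw [if_neg (by decide)]
  have hdval : ∀ t, P t {0,1} - P t {2,3} = Real.exp (-(4/3 * t)) := by
    intro t
    have := ode_solve (fun s => P s {0,1} - P s {2,3}) 0 (4/3) (by norm_num) hd' t
    rw [this, hP001, hP023]
    norm_num
  have hwval : ∀ t, P t {0,1} + P t {2,3} = 1/3 + 2/3 * Real.exp (-(1 * t)) := by
    intro t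
    have := ode_solve (fun s => P s {0,1} + P s {2,3}) (1/3) 1 (by norm_num) hw' t
    rw [this, hP001, hP023]
    norm_num
  have hqval : ∀ t, P t ({2,3} : Finset (Fin 4))
      = 1/6 + 1/3 * Real.exp (-t) - 1/2 * Real.exp (-(4/3 * t)) := by
    intro t
    have h1 := hdval t
    have h2 := hwval t
    rw [show -(1 * t) = -t by ring] at h2
    linarith
  refine ⟨?_, ?_, ?_⟩
  · intro t ht
    set y := Real.exp (-(t/3)) with hy
    have hy3 : y ^ 3 = Real.exp (-t) := by
      rw [hy, ← Real.exp_nat_mul]; congr 1; push_cast; ring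
    have hy4 : y ^ 4 = Real.exp (-(4/3 * t)) := by
      rw [hy, ← Real.exp_nat_mul]; congr 1; push_cast; ring
    have hy0 : 0 < y := Real.exp_pos _
    have hyle : y ≤ 1 := by rw [hy, Real.exp_le_one_iff]; linarith
    rw [hufor t, hvfor t, ← hy3, ← hy4]
    have hc : y ^ 3 ≤ 1 := pow_le_one₀ (le_of_lt hy0) hyle
    have hq4 : y ^ 4 ≤ 1 := pow_le_one₀ (le_of_lt hy0) hyle
    have hA : 0 ≤ (1 - y) * (1 + y + y^2 - y^3) := by nlinarith
    have hB : 0 ≤ (1 - y^3) + (1 - y^4)/2 := by nlinarith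
    nlinarith [mul_nonneg hA hB]
  · intro t ht
    set y := Real.exp (-(t/3)) with hy
    have hy3 : y ^ 3 = Real.exp (-t) := by
      rw [hy, ← Real.exp_nat_mul]; congr 1; push_cast; ring
    have hy4 : y ^ 4 = Real.exp (-(4/3 * t)) := by
      rw [hy, ← Real.exp_nat_mul]; congr 1; push_cast; ring
    have hy0 : 0 < y := Real.exp_pos _
    have hyle : y ≤ 1 := by rw [hy, Real.exp_le_one_iff]; linarith
    rw [hqval t, ← hy3, ← hy4]
    have hexp : t/3 + 1 ≤ Real.exp (t/3) := Real.add_one_le_exp _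
    have hinv : y * Real.exp (t/3) = 1 := by
      rw [hy, ← Real.exp_add]; norm_num
    have hty : t * y ≤ 3 * (1 - y) := by
      nlinarith [mul_le_mul_of_nonneg_right hexp (le_of_lt hy0)]
    have hcube : 0 ≤ (1 - y)^3 * (3*y + 1) := by
      apply mul_nonneg (pow_nonneg (by linarith) 3) (by linarith)
    nlinarith [mul_le_mul_of_nonneg_right hty (sq_nonneg y), hcube]
  · intro t ht1 ht2
    set y := Real.exp (-(t/3)) with hy
    have hy3 : y ^ 3 = Real.exp (-t) := by
      rw [hy, ← Real.exp_nat_mul]; congr 1; push_cast; ring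
    have hy4 : y ^ 4 = Real.exp (-(4/3 * t)) := by
      rw [hy, ← Real.exp_nat_mul]; congr 1; push_cast; ring
    have hy0 : 0 < y := Real.exp_pos _
    have h89 : (0.89 : ℝ) < y := by
      have := Real.add_one_le_exp (-(t/3))
      rw [← hy] at this
      norm_num at ht2 ⊢
      linarith
    have hlt1 : y < 1 := by
      rw [hy, ← Real.exp_zero]
      exact Real.exp_lt_exp.2 (by linarith)
    rw [hufor t, hvfor t, hqval t, ← hy3, ← hy4]
    have hF : 0 < 3*y^7 + 3*y^6 + 3*y^5 + 3*y^4 + 3*y^3 - y^2 - y - 1 := by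
      nlinarith [pow_le_pow_left₀ (by norm_num : (0:ℝ) ≤ 0.89) h89.le 7,
        pow_le_pow_left₀ (by norm_num : (0:ℝ) ≤ 0.89) h89.le 6,
        pow_le_pow_left₀ (by norm_num : (0:ℝ) ≤ 0.89) h89.le 5,
        pow_le_pow_left₀ (by norm_num : (0:ℝ) ≤ 0.89) h89.le 4,
        pow_le_pow_left₀ (by norm_num : (0:ℝ) ≤ 0.89) h89.le 3,
        sq_nonneg y, hy0, hlt1]
    nlinarith [mul_pos (by linarith : (0:ℝ) < 1 - y) hF]

end
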